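/- Let X = V/Λ be an abelian surface with Λ = ⟨λ₁, λ₂⟩ ⊕ ⟨μ₁, μ₂⟩ a symplectic basis for a polarization L of type (1,d), so that Im H is given by the matrix [[0, D],[−D, 0]] with D = diag(1,d), and let π : V → X be the projection. (i) If G is the cyclic subgroup generated by π(λ₂/d), then L itself descends under q : X → X/G (so the minimal n with nL = q*M is n = 1). (ii) If k > 1 and G is the subgroup generated by π(λ₁/k) and π(μ₁/k), then the minimal positive integer n with nL = q*M for some line bundle M on X/G is n = k² = exp(G)². -/

import Mathlib

/-!
Formalization conventions (Appell–Humbert framework).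

An abelian surface is `X = V/Λ` with `V` a 2-dimensional complex vector space
and `Λ ⊆ V` a lattice (a subgroup with a ℤ-basis of 4 elements).  By the
Appell–Humbert theorem, a line bundle on `X` is given by data `L(H, χ)`:
a Hermitian form `H` on `V` whose imaginary part is integer-valued on
`Λ × Λ`, and a semicharacter `χ : Λ → U(1)` for `H`.  For `Λ ≤ Λ'` with
`Λ'/Λ` finite, `Y = V/Λ'` is the quotient abelian surface `X/G`
(`G = Λ'/Λ = π⁻¹`-image), `q : X → Y` the quotient map, and the pullback of
`L(H', χ')` along `q` is `L(H', χ'|_Λ)`.  Thus "`L(H, χ) = q*M` for some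
`M ∈ Pic(Y)`" is: there is Appell–Humbert data on `Λ'` whose Hermitian form is
`H` and whose semicharacter restricts to `χ` on `Λ`.
-/

/-- Appell–Humbert data `L(H, χ)` for the lattice `Λ ⊆ V`: a Hermitian form
`H` on `V` (conjugate-linear in the first variable, ℂ-linear in the second)
with `Im H` integer-valued on `Λ × Λ`, together with a semicharacter `χ`. -/
structure AppellHumbertData (V : Type) [AddCommGroup V] [Module ℂ V]
    (Λ : AddSubgroup V) where
  /-- the Hermitian form -/
  H : V → V → ℂ
  add_left : ∀ x y z : V, H (x + y) z = H x z + H y z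
  smul_right : ∀ (c : ℂ) (x y : V), H x (c • y) = c * H x y
  conj_symm : ∀ x y : V, H y x = starRingEnd ℂ (H x y)
  /-- `Im H` takes integer values on `Λ × Λ` -/
  integral : ∀ l m : Λ, ∃ z : ℤ, (H (l : V) (m : V)).im = (z : ℝ)
  /-- the semicharacter -/
  χ : Λ → ℂ
  χ_norm : ∀ l : Λ, ‖χ l‖ = 1
  χ_mul : ∀ l m : Λ, χ (l + m) =
    χ l * χ m * Complex.exp (Real.pi * Complex.I * ((H (l : V) (m : V)).im : ℂ))

/-- The Appell–Humbert data `D` is of type `(1,d)` with respect to the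
symplectic ℤ-basis `b = (λ₁, λ₂, μ₁, μ₂)` of `Λ`: the alternating form
`E = Im H` has matrix `[[0, diag(1,d)], [−diag(1,d), 0]]` in this basis. -/
def AppellHumbertData.IsTypeOneD {V : Type} [AddCommGroup V] [Module ℂ V]
    {Λ : AddSubgroup V} (D : AppellHumbertData V Λ) (d : ℕ)
    (b : Module.Basis (Fin 4) ℤ Λ) : Prop :=
  (D.H ((b 0 : Λ) : V) ((b 2 : Λ) : V)).im = 1 ∧
  (D.H ((b 1 : Λ) : V) ((b 3 : Λ) : V)).im = (d : ℝ) ∧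
  (D.H ((b 0 : Λ) : V) ((b 1 : Λ) : V)).im = 0 ∧
  (D.H ((b 0 : Λ) : V) ((b 3 : Λ) : V)).im = 0 ∧
  (D.H ((b 1 : Λ) : V) ((b 2 : Λ) : V)).im = 0 ∧
  (D.H ((b 2 : Λ) : V) ((b 3 : Λ) : V)).im = 0

/-!
STATEMENT 9.  Let `X = V/Λ` be an abelian surface with symplectic basis
`Λ = ⟨λ₁, λ₂⟩ ⊕ ⟨μ₁, μ₂⟩` for a polarization `L` of type `(1,d)` (so `Im H`
has matrix `[[0, D], [−D, 0]]`, `D = diag(1,d)`), and let `π : V → X` be the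
projection.
(i) If `G = ⟨π(λ₂/d)⟩`, then `L` itself descends under `q : X → X/G` (so the
minimal `n` with `nL = q*M` is `n = 1`).
(ii) If `k > 1` and `G = ⟨π(λ₁/k), π(μ₁/k)⟩`, then the minimal positive
integer `n` with `nL = q*M` for some line bundle `M` on `X/G` is
`n = k² = exp(G)²`.

Conventions: the symplectic basis is `b = (λ₁, λ₂, μ₁, μ₂) = (b 0, b 1, b 2,
b 3)`.  The subgroup `G = ⟨π(v₁), …⟩` of `X = V/Λ` corresponds to the lattice
`Λ' = Λ ⊔ ⟨v₁, …⟩` of `X/G`, and `nL` descends iff there is Appell–Humbert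
data `D'` on `Λ'` with Hermitian form `n·H` whose semicharacter restricts to
`χⁿ` on `Λ`.  `exp(G)` is the exponent of `G = Λ'/Λ`.
-/

open Complex

set_option linter.unusedSectionVars false

section Helpers

lemma mem_of_basis {M : Type*} [AddCommGroup M] {ι : Type*} (b : Module.Basis ι ℤ M)
    (S : AddSubgroup M) (h : ∀ i, b i ∈ S) (x : M) : x ∈ S := by
  have hx : x ∈ Submodule.span ℤ (Set.range b) := by rw [b.span_eq]; trivial
  induction hx using Submodule.span_induction with
  | mem y hy => obtain ⟨i, rfl⟩ := hy; exact h i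
  | zero => exact S.zero_mem
  | add x y _ _ hx hy => exact S.add_mem hx hy
  | smul a x _ hx => exact AddSubgroup.zsmul_mem S hx a

variable {V : Type} [AddCommGroup V] [Module ℂ V]

variable {H : V → V → ℂ}
  (hadd : ∀ x y z : V, H (x + y) z = H x z + H y z)
  (hsmul : ∀ (c : ℂ) (x y : V), H x (c • y) = c * H x y)
  (hconj : ∀ x y : V, H y x = starRingEnd ℂ (H x y))

section FormLemmas
include hadd hsmul hconj

lemma H_add_right (x y z : V) : H x (y + z) = H x y + H x z := by
  rw [hconj (y+z) x, hadd, map_add, ← hconj y x, ← hconj z x]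

lemma H_smul_left (c : ℂ) (x y : V) :
    H (c • x) y = starRingEnd ℂ c * H x y := by
  rw [hconj y (c • x), hsmul, map_mul, ← hconj y x]

lemma H_real_smul_left (r : ℝ) (x y : V) : H ((r:ℂ) • x) y = (r:ℂ) * H x y := by
  rw [H_smul_left hadd hsmul hconj]; simp

lemma H_zsmul_left (n : ℤ) (x y : V) : H (n • x) y = (n:ℂ) * H x y := by
  rw [← Int.cast_smul_eq_zsmul ℂ, H_smul_left hadd hsmul hconj]; simp

lemma H_zsmul_right (n : ℤ) (x y : V) : H x (n • y) = (n:ℂ) * H x y := by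
  rw [← Int.cast_smul_eq_zsmul ℂ, hsmul]

lemma Him_antisymm (x y : V) : (H y x).im = -(H x y).im := by
  rw [hconj]; simp

lemma Him_diag (x : V) : (H x x).im = 0 := by
  have := Him_antisymm hadd hsmul hconj x x; linarith

end FormLemmas


lemma im_intCast_mul (n : ℤ) (z : ℂ) : ((n:ℂ) * z).im = n * z.im := by
  simp [Complex.mul_im]

variable {Λ' : AddSubgroup V} (b' : Module.Basis (Fin 4) ℤ Λ')

include hadd hsmul hconj in
lemma im_expand (e02 e13 : ℤ)
    (h02 : (H ((b' 0 : Λ') : V) ((b' 2 : Λ') : V)).im = (e02 : ℝ))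
    (h13 : (H ((b' 1 : Λ') : V) ((b' 3 : Λ') : V)).im = (e13 : ℝ))
    (h01 : (H ((b' 0 : Λ') : V) ((b' 1 : Λ') : V)).im = 0)
    (h03 : (H ((b' 0 : Λ') : V) ((b' 3 : Λ') : V)).im = 0)
    (h12 : (H ((b' 1 : Λ') : V) ((b' 2 : Λ') : V)).im = 0)
    (h23 : (H ((b' 2 : Λ') : V) ((b' 3 : Λ') : V)).im = 0)
    (l m : Λ') :
    (H (l : V) (m : V)).im
      = (((b'.repr l 0 * b'.repr m 2 - b'.repr l 2 * b'.repr m 0) * e02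
        + (b'.repr l 1 * b'.repr m 3 - b'.repr l 3 * b'.repr m 1) * e13 : ℤ) : ℝ) := by
  have him_anti := Him_antisymm hadd hsmul hconj
  have him_diag := Him_diag hadd hsmul hconj
  let B1 : Λ' →ₗ[ℤ] Λ' →ₗ[ℤ] ℝ := LinearMap.mk₂ ℤ (fun l m : Λ' => (H (l:V) (m:V)).im)
    (by intro x y z; push_cast; rw [hadd]; simp)
    (by intro c x y; push_cast
        rw [H_zsmul_left hadd hsmul hconj, im_intCast_mul]; simp [zsmul_eq_mul])
    (by intro x y z; push_cast; rw [H_add_right hadd hsmul hconj]; simp)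
    (by intro c x y; push_cast
        rw [H_zsmul_right hadd hsmul hconj, im_intCast_mul]; simp [zsmul_eq_mul])
  let B2 : Λ' →ₗ[ℤ] Λ' →ₗ[ℤ] ℝ := LinearMap.mk₂ ℤ
    (fun l m : Λ' => (((b'.repr l 0 * b'.repr m 2 - b'.repr l 2 * b'.repr m 0) * e02
        + (b'.repr l 1 * b'.repr m 3 - b'.repr l 3 * b'.repr m 1) * e13 : ℤ) : ℝ))
    (by intro x y z; simp only [map_add, Finsupp.add_apply]; push_cast; ring)
    (by intro c x y; simp only [map_smul, Finsupp.smul_apply, smul_eq_mul, zsmul_eq_mul]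
        push_cast; ring)
    (by intro x y z; simp only [map_add, Finsupp.add_apply]; push_cast; ring)
    (by intro c x y; simp only [map_smul, Finsupp.smul_apply, smul_eq_mul, zsmul_eq_mul]
        push_cast; ring)
  have h00 := him_diag ((b' 0 : Λ') : V)
  have h11 := him_diag ((b' 1 : Λ') : V)
  have h22 := him_diag ((b' 2 : Λ') : V)
  have h33 := him_diag ((b' 3 : Λ') : V)
  have h10 : (H ((b' 1 : Λ') : V) ((b' 0 : Λ') : V)).im = 0 := by rw [him_anti, h01]; ring
  have h20 : (H ((b' 2 : Λ') : V) ((b' 0 : Λ') : V)).im = -(e02:ℝ) := by rw [him_anti, h02]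
  have h30 : (H ((b' 3 : Λ') : V) ((b' 0 : Λ') : V)).im = 0 := by rw [him_anti, h03]; ring
  have h21 : (H ((b' 2 : Λ') : V) ((b' 1 : Λ') : V)).im = 0 := by rw [him_anti, h12]; ring
  have h31 : (H ((b' 3 : Λ') : V) ((b' 1 : Λ') : V)).im = -(e13:ℝ) := by rw [him_anti, h13]
  have h32 : (H ((b' 3 : Λ') : V) ((b' 2 : Λ') : V)).im = 0 := by rw [him_anti, h23]; ring
  have hB : B1 = B2 := Module.Basis.ext b' fun i => Module.Basis.ext b' fun j => by
    simp only [B1, B2, LinearMap.mk₂_apply, Module.Basis.repr_self, Finsupp.single_apply]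
    fin_cases i <;> fin_cases j <;>
      (try norm_num) <;>
      first
        | exact h00 | exact h11 | exact h22 | exact h33
        | exact h01 | exact h02 | exact h03 | exact h12 | exact h13 | exact h23
        | exact h10 | exact h20 | exact h30 | exact h21 | exact h31 | exact h32
        | (push_cast; linarith [h00, h01, h02, h03, h10, h11, h12, h13, h20, h21,
            h22, h23, h30, h31, h32, h33])
  have hfin := LinearMap.congr_fun (LinearMap.congr_fun hB l) m
  simpa only [B1, B2, LinearMap.mk₂_apply] using hfin


include hadd hsmul hconj in
lemma construct_AH (e02 e13 : ℤ)
    (h02 : (H ((b' 0 : Λ') : V) ((b' 2 : Λ') : V)).im = (e02 : ℝ))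
    (h13 : (H ((b' 1 : Λ') : V) ((b' 3 : Λ') : V)).im = (e13 : ℝ))
    (h01 : (H ((b' 0 : Λ') : V) ((b' 1 : Λ') : V)).im = 0)
    (h03 : (H ((b' 0 : Λ') : V) ((b' 3 : Λ') : V)).im = 0)
    (h12 : (H ((b' 1 : Λ') : V) ((b' 2 : Λ') : V)).im = 0)
    (h23 : (H ((b' 2 : Λ') : V) ((b' 3 : Λ') : V)).im = 0)
    (s : Fin 4 → ℂ) (hs : ∀ i, ‖s i‖ = 1) :
    ∃ D' : AppellHumbertData V Λ', (∀ x y : V, D'.H x y = H x y) ∧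
      ∀ x : Λ', D'.χ x = s 0 ^ (b'.repr x 0) * s 1 ^ (b'.repr x 1) * s 2 ^ (b'.repr x 2)
        * s 3 ^ (b'.repr x 3) * Complex.exp (Real.pi * Complex.I *
          ((b'.repr x 0 * b'.repr x 2 * e02 + b'.repr x 1 * b'.repr x 3 * e13 : ℤ) : ℂ)) := by
  have hsne : ∀ i, s i ≠ 0 := by
    intro i h
    have := hs i
    rw [h] at this
    simp at this
  have key := im_expand hadd hsmul hconj b' e02 e13 h02 h13 h01 h03 h12 h23
  refine ⟨⟨H, hadd, hsmul, hconj, fun l m => ⟨_, key l m⟩,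
    fun x => s 0 ^ (b'.repr x 0) * s 1 ^ (b'.repr x 1) * s 2 ^ (b'.repr x 2)
        * s 3 ^ (b'.repr x 3) * Complex.exp (Real.pi * Complex.I *
          ((b'.repr x 0 * b'.repr x 2 * e02 + b'.repr x 1 * b'.repr x 3 * e13 : ℤ) : ℂ)),
    ?_, ?_⟩, fun _ _ => rfl, fun _ => rfl⟩
  · intro l
    simp [norm_mul, norm_zpow, hs, Complex.norm_exp]
  · intro l m
    have hrep : ∀ i : Fin 4, b'.repr (l + m) i = b'.repr l i + b'.repr m i := fun i => by
      simp
    simp only [key l m, hrep]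
    rw [zpow_add₀ (hsne 0), zpow_add₀ (hsne 1), zpow_add₀ (hsne 2), zpow_add₀ (hsne 3)]
    rw [show ((Real.pi : ℂ) * Complex.I *
        (((b'.repr l 0 + b'.repr m 0) * (b'.repr l 2 + b'.repr m 2) * e02
          + (b'.repr l 1 + b'.repr m 1) * (b'.repr l 3 + b'.repr m 3) * e13 : ℤ) : ℂ))
      = (Real.pi : ℂ) * Complex.I *
          ((b'.repr l 0 * b'.repr l 2 * e02 + b'.repr l 1 * b'.repr l 3 * e13 : ℤ) : ℂ)
        + (Real.pi : ℂ) * Complex.I *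
          ((b'.repr m 0 * b'.repr m 2 * e02 + b'.repr m 1 * b'.repr m 3 * e13 : ℤ) : ℂ)
        + (Real.pi : ℂ) * Complex.I *
          (((((b'.repr l 0 * b'.repr m 2 - b'.repr l 2 * b'.repr m 0) * e02
            + (b'.repr l 1 * b'.repr m 3 - b'.repr l 3 * b'.repr m 1) * e13 : ℤ) : ℝ)) : ℂ)
        + ((b'.repr l 2 * b'.repr m 0 * e02 + b'.repr l 3 * b'.repr m 1 * e13 : ℤ) : ℂ)
            * (2 * (Real.pi : ℂ) * Complex.I) from by push_cast; ring]
    rw [Complex.exp_add, Complex.exp_add, Complex.exp_add,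
      Complex.exp_int_mul_two_pi_mul_I]
    ring


lemma basis_scaled (Λ Λ'' : AddSubgroup V) (b : Module.Basis (Fin 4) ℤ Λ) (t : Fin 4 → ℕ)
    (ht : ∀ i, (t i : ℂ) ≠ 0)
    (hw : ∀ i, (t i : ℂ)⁻¹ • ((b i : Λ) : V) ∈ Λ'')
    (S : Set V) (hS : S ⊆ Set.range fun i => (t i : ℂ)⁻¹ • ((b i : Λ) : V))
    (hΛ' : Λ'' = Λ ⊔ AddSubgroup.closure S) :
    ∃ b' : Module.Basis (Fin 4) ℤ Λ'',
      ∀ i, ((b' i : Λ'') : V) = (t i : ℂ)⁻¹ • ((b i : Λ) : V) := by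
  set u : Fin 4 → V := fun i => ((b i : Λ) : V) with hu
  set w : Fin 4 → V := fun i => (t i : ℂ)⁻¹ • u i with hww
  set c : Fin 4 → Λ'' := fun i => ⟨w i, hw i⟩ with hc
  have hbw : ∀ i, u i = (t i : ℤ) • w i := by
    intro i
    rw [← Int.cast_smul_eq_zsmul ℂ]
    push_cast
    exact (smul_inv_smul₀ (ht i) (u i)).symm
  have hinj : LinearMap.ker (Λ.subtype.toIntLinearMap) = ⊥ :=
    LinearMap.ker_eq_bot.mpr (fun x y h => Subtype.ext h)
  have hui : LinearIndependent ℤ u :=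
    b.linearIndependent.map' Λ.subtype.toIntLinearMap hinj
  have htne : ∀ i, (t i : ℤ) ≠ 0 := by
    intro i h
    exact ht i (by exact_mod_cast h)
  have hwi : LinearIndependent ℤ w := by
    rw [Fintype.linearIndependent_iff] at hui ⊢
    intro g hg i
    set P : Fin 4 → ℕ := fun i => ∏ j ∈ Finset.univ.erase i, t j with hP
    have hTP : ∀ i, t i * P i = ∏ j, t j := fun i =>
      Finset.mul_prod_erase _ _ (Finset.mem_univ i)
    have hsum : ∑ j, (g j * (P j : ℤ)) • u j = 0 := by
      have : ∀ j : Fin 4, (g j * (P j : ℤ)) • u j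
          = ((∏ j, t j : ℕ) : ℤ) • (g j • w j) := by
        intro j
        rw [hbw j, smul_smul, smul_smul]
        congr 1
        rw [← hTP j]
        push_cast
        ring
      rw [Finset.sum_congr rfl (fun j _ => this j), ← Finset.smul_sum, hg, smul_zero]
    have hPne : ∀ i, (P i : ℤ) ≠ 0 := by
      intro i h
      rw [Int.natCast_eq_zero, Finset.prod_eq_zero_iff] at h
      obtain ⟨j, _, hj⟩ := h
      exact htne j (by exact_mod_cast hj)
    have := hui _ hsum i
    exact (mul_eq_zero.mp this).resolve_right (hPne i)
  have hci : LinearIndependent ℤ c := by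
    apply LinearIndependent.of_comp Λ''.subtype.toIntLinearMap
    exact hwi
  set Sm : Submodule ℤ Λ'' := Submodule.span ℤ (Set.range c) with hSm
  set T' : AddSubgroup V := AddSubgroup.map Λ''.subtype Sm.toAddSubgroup with hT'
  have hwT : ∀ i, w i ∈ T' := fun i =>
    ⟨c i, (Submodule.mem_toAddSubgroup _).mpr (Submodule.subset_span ⟨i, rfl⟩), rfl⟩
  have hΛT : Λ ≤ T' := by
    intro x hx
    have := mem_of_basis b (T'.comap Λ.subtype) (fun i => by
      show ((b i : Λ) : V) ∈ T'
      rw [show ((b i : Λ) : V) = u i from rfl, hbw i]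
      exact AddSubgroup.zsmul_mem _ (hwT i) _) ⟨x, hx⟩
    exact this
  have hΛ'T : Λ'' ≤ T' := by
    rw [hΛ']
    refine sup_le hΛT ((AddSubgroup.closure_le _).mpr ?_)
    intro x hx
    obtain ⟨i, rfl⟩ := hS hx
    exact hwT i
  have hspan : ⊤ ≤ Sm := by
    intro x _
    obtain ⟨y, hy, hyx⟩ := hΛ'T x.2
    have : y = x := Subtype.ext hyx
    rw [← this]
    exact (Submodule.mem_toAddSubgroup _).mp hy
  exact ⟨Module.Basis.mk hci hspan, fun i => by rw [Module.Basis.mk_apply]⟩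

lemma chi_eq_of_basis {Λ Λ'' : AddSubgroup V} (hle : Λ ≤ Λ'')
    (b : Module.Basis (Fin 4) ℤ Λ) (χ : Λ → ℂ) (χ' : Λ'' → ℂ) (E : Λ → Λ → ℝ)
    (hχn : ∀ l, χ l ≠ 0) (hχ'n : ∀ l, χ' l ≠ 0)
    (hχm : ∀ l m, χ (l + m) = χ l * χ m * Complex.exp (Real.pi * Complex.I * (E l m : ℂ)))
    (hχ'm : ∀ l m : Λ, χ' ⟨(l : V), hle l.2⟩ * χ' ⟨(m : V), hle m.2⟩
        * Complex.exp (Real.pi * Complex.I * (E l m : ℂ))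
        = χ' ⟨((l + m : Λ) : V), hle (l + m).2⟩)
    (hbase : ∀ i, χ' ⟨((b i : Λ) : V), hle (b i).2⟩ = χ (b i)) :
    ∀ l : Λ, χ' ⟨(l : V), hle l.2⟩ = χ l := by
  set ι : Λ → Λ'' := fun l => ⟨(l : V), hle l.2⟩ with hι
  set f : Λ → ℂ := fun l => χ' (ι l) * (χ l)⁻¹ with hf
  have hfne : ∀ l, f l ≠ 0 := fun l => mul_ne_zero (hχ'n _) (inv_ne_zero (hχn _))
  have hmul : ∀ l m, f (l + m) = f l * f m := by
    intro l m
    have he : Complex.exp (Real.pi * Complex.I * (E l m : ℂ)) ≠ 0 := Complex.exp_ne_zero _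
    simp only [f, ι]
    rw [← hχ'm l m, hχm l m]
    field_simp
  have h0 : f 0 = 1 := by
    have h := hmul 0 0
    rw [add_zero] at h
    have := mul_left_cancel₀ (hfne 0) (by rw [← h, mul_one] : f 0 * 1 = f 0 * f 0)
    exact this.symm
  have hneg : ∀ l, f l = 1 → f (-l) = 1 := by
    intro l hl
    have h := hmul l (-l)
    rw [add_neg_cancel, h0, hl, one_mul] at h
    exact h.symm
  set S : AddSubgroup Λ :=
    { carrier := {l | f l = 1}
      zero_mem' := h0
      add_mem' := fun hx hy => by
        simp only [Set.mem_setOf_eq] at *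
        rw [hmul, hx, hy, one_mul]
      neg_mem' := fun hx => hneg _ hx } with hSdef
  have hall : ∀ l, f l = 1 := fun l =>
    mem_of_basis b S (fun i => show f (b i) = 1 by
      simp only [f, ι, hbase i]
      exact mul_inv_cancel₀ (hχn _)) l
  intro l
  have h := hall l
  simp only [f, ι] at h
  field_simp at h
  rwa [div_eq_one_iff_eq (hχn l)] at h


end Helpers

set_option maxHeartbeats 2000000 in
theorem descent_of_polarization_examples
    (V : Type) [AddCommGroup V] [Module ℂ V]
    (hV : Module.finrank ℂ V = 2)
    (Λ : AddSubgroup V) (b : Module.Basis (Fin 4) ℤ Λ)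
    (d : ℕ) (hd : 0 < d)
    (D : AppellHumbertData V Λ) (hD : D.IsTypeOneD d b) :
    -- (i) `G = ⟨π(λ₂/d)⟩`: `L` itself descends, i.e. the minimal `n` is `1`
    (∀ Λ' : AddSubgroup V,
      Λ' = Λ ⊔ AddSubgroup.closure {(d : ℂ)⁻¹ • ((b 1 : Λ) : V)} →
      ∀ hle : Λ ≤ Λ',
        ∃ D' : AppellHumbertData V Λ',
          (∀ x y : V, D'.H x y = D.H x y) ∧
          ∀ l : Λ, D'.χ ⟨(l : V), hle l.2⟩ = D.χ l) ∧
    -- (ii) `G = ⟨π(λ₁/k), π(μ₁/k)⟩`, `k > 1`: the minimal `n` is `k² = exp(G)²`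
    (∀ k : ℕ, 1 < k → ∀ Λ' : AddSubgroup V,
      Λ' = Λ ⊔ AddSubgroup.closure
          {(k : ℂ)⁻¹ • ((b 0 : Λ) : V), (k : ℂ)⁻¹ • ((b 2 : Λ) : V)} →
      ∀ hle : Λ ≤ Λ',
        -- `k²·L` descends …
        (∃ D' : AppellHumbertData V Λ',
          (∀ x y : V, D'.H x y = (k ^ 2 : ℂ) * D.H x y) ∧
          ∀ l : Λ, D'.χ ⟨(l : V), hle l.2⟩ = D.χ l ^ (k ^ 2)) ∧
        -- … `k²` is minimal among positive `m` such that `m·L` descends …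
        (∀ m : ℕ, 0 < m →
          (∃ D' : AppellHumbertData V Λ',
            (∀ x y : V, D'.H x y = (m : ℂ) * D.H x y) ∧
            ∀ l : Λ, D'.χ ⟨(l : V), hle l.2⟩ = D.χ l ^ m) →
          k ^ 2 ≤ m) ∧
        -- … and `k` is the exponent of `G = Λ'/Λ`
        k = AddMonoid.exponent (Λ' ⧸ Λ.addSubgroupOf Λ')) := by
  obtain ⟨hD02, hD13, hD01, hD03, hD12, hD23⟩ := hD
  have hχne : ∀ l : Λ, D.χ l ≠ 0 := by
    intro l h
    have := D.χ_norm l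
    rw [h] at this
    simp at this
  have hdC : (d : ℂ) ≠ 0 := Nat.cast_ne_zero.mpr hd.ne'
  have hdR : (d : ℝ) ≠ 0 := Nat.cast_ne_zero.mpr hd.ne'
  have hinv : ∀ (c : ℕ) (x y : V), D.H ((c : ℂ)⁻¹ • x) y = (c : ℂ)⁻¹ * D.H x y := by
    intro c x y
    have := H_smul_left D.add_left D.smul_right D.conj_symm ((c : ℂ)⁻¹) x y
    rwa [show starRingEnd ℂ ((c : ℂ)⁻¹) = (c : ℂ)⁻¹ by simp] at this
  have himinv : ∀ (c : ℕ) (z : ℂ), ((c : ℂ)⁻¹ * z).im = (c : ℝ)⁻¹ * z.im := by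
    intro c z
    rw [show ((c : ℂ)⁻¹) = (((c : ℝ)⁻¹ : ℝ) : ℂ) by push_cast; ring, Complex.im_ofReal_mul]
  constructor
  · -- Part (i)
    intro Λ' hΛ' hle
    set t : Fin 4 → ℕ := ![1, d, 1, 1] with hts
    have ht : ∀ i, (t i : ℂ) ≠ 0 := by
      intro i
      fin_cases i <;> simp [t, hd.ne']
    have hw : ∀ i, (t i : ℂ)⁻¹ • ((b i : Λ) : V) ∈ Λ' := by
      intro i
      fin_cases i
      · simpa [t] using hle (b 0).2
      · rw [hΛ']
        exact SetLike.le_def.mp le_sup_right (AddSubgroup.subset_closure (by simp [t]))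
      · simpa [t] using hle (b 2).2
      · simpa [t] using hle (b 3).2
    have hS : ({(d : ℂ)⁻¹ • ((b 1 : Λ) : V)} : Set V)
        ⊆ Set.range fun i => (t i : ℂ)⁻¹ • ((b i : Λ) : V) := by
      intro x hx
      rw [Set.mem_singleton_iff] at hx
      exact ⟨1, by simp [t, hx]⟩
    obtain ⟨b', hb'⟩ := basis_scaled Λ Λ' b t ht hw _ hS hΛ'
    have hb'0 : ((b' 0 : Λ') : V) = ((b 0 : Λ) : V) := by rw [hb' 0]; simp [t]
    have hb'1 : ((b' 1 : Λ') : V) = (d : ℂ)⁻¹ • ((b 1 : Λ) : V) := by rw [hb' 1]; simp [t]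
    have hb'2 : ((b' 2 : Λ') : V) = ((b 2 : Λ) : V) := by rw [hb' 2]; simp [t]
    have hb'3 : ((b' 3 : Λ') : V) = ((b 3 : Λ) : V) := by rw [hb' 3]; simp [t]
    set s : Fin 4 → ℂ := ![D.χ (b 0), Complex.exp (Complex.log (D.χ (b 1)) / d),
      D.χ (b 2), D.χ (b 3)] with hss
    have hlogre : (Complex.log (D.χ (b 1)) / (d : ℂ)).re = 0 := by
      have h1 : (Complex.log (D.χ (b 1))).re = 0 := by
        rw [Complex.log_re, D.χ_norm, Real.log_one]
      simp [Complex.div_re, h1]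
    have hs : ∀ i, ‖s i‖ = 1 := by
      intro i
      fin_cases i <;> simp [s, Complex.norm_exp, hlogre, D.χ_norm]
    obtain ⟨D', hH', hχform⟩ := construct_AH D.add_left D.smul_right D.conj_symm b' 1 1
      (by rw [hb'0, hb'2]; simpa using hD02)
      (by rw [hb'1, hb'3, hinv, himinv, hD13]; field_simp; norm_num)
      (by rw [hb'0, hb'1, D.smul_right, himinv, hD01]; ring)
      (by rw [hb'0, hb'3]; exact hD03)
      (by rw [hb'1, hb'2, hinv, himinv, hD12]; ring)
      (by rw [hb'2, hb'3]; exact hD23)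
      s hs
    have hχ'ne : ∀ x : Λ', D'.χ x ≠ 0 := by
      intro x h
      have := D'.χ_norm x
      rw [h] at this
      simp at this
    have hib : ∀ i, (⟨((b i : Λ) : V), hle (b i).2⟩ : Λ') = (t i : ℤ) • b' i := by
      intro i
      apply Subtype.ext
      have : (((t i : ℤ) • b' i : Λ') : V) = (t i : ℤ) • ((b' i : Λ') : V) := by simp
      rw [this, hb' i, ← Int.cast_smul_eq_zsmul ℂ]
      push_cast
      rw [smul_inv_smul₀ (ht i)]
    have hrepib : ∀ i, b'.repr (⟨((b i : Λ) : V), hle (b i).2⟩ : Λ')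
        = Finsupp.single i (t i : ℤ) := by
      intro i
      rw [hib i, map_zsmul, b'.repr_self, Finsupp.smul_single]
      simp
    have hbase : ∀ i, D'.χ ⟨((b i : Λ) : V), hle (b i).2⟩ = D.χ (b i) := by
      intro i
      rw [hχform, hrepib i]
      fin_cases i <;> simp [t, s, Finsupp.single_apply]
      rw [← Complex.exp_nat_mul]
      rw [show ((d : ℕ) : ℂ) * (Complex.log (D.χ (b 1)) / (d : ℂ))
          = Complex.log (D.χ (b 1)) by field_simp]
      exact Complex.exp_log (hχne (b 1))
    refine ⟨D', hH', ?_⟩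
    refine chi_eq_of_basis hle b D.χ D'.χ (fun l m => (D.H (l : V) (m : V)).im)
      hχne hχ'ne D.χ_mul ?_ hbase
    intro l m
    have hιadd : (⟨(l : V), hle l.2⟩ : Λ') + ⟨(m : V), hle m.2⟩
        = ⟨((l + m : Λ) : V), hle (l + m).2⟩ := Subtype.ext (by simp)
    rw [← hιadd, D'.χ_mul, hH']
  · -- Part (ii)
    intro k hk Λ' hΛ' hle
    have hkpos : 0 < k := by omega
    have hkC : (k : ℂ) ≠ 0 := Nat.cast_ne_zero.mpr hkpos.ne'
    have hkR : (k : ℝ) ≠ 0 := Nat.cast_ne_zero.mpr hkpos.ne'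
    have hadd' : ∀ x y z : V, (k : ℂ) ^ 2 * D.H (x + y) z
        = (k : ℂ) ^ 2 * D.H x z + (k : ℂ) ^ 2 * D.H y z := by
      intro x y z; rw [D.add_left]; ring
    have hsmul' : ∀ (c : ℂ) (x y : V), (k : ℂ) ^ 2 * D.H x (c • y)
        = c * ((k : ℂ) ^ 2 * D.H x y) := by
      intro c x y; rw [D.smul_right]; ring
    have hconj' : ∀ x y : V, (k : ℂ) ^ 2 * D.H y x
        = starRingEnd ℂ ((k : ℂ) ^ 2 * D.H x y) := by
      intro x y; rw [D.conj_symm x y, map_mul]; congr 1; simp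
    set t : Fin 4 → ℕ := ![k, 1, k, 1] with hts
    have ht : ∀ i, (t i : ℂ) ≠ 0 := by
      intro i; fin_cases i <;> simp [t, hkC]
    have hw : ∀ i, (t i : ℂ)⁻¹ • ((b i : Λ) : V) ∈ Λ' := by
      intro i
      fin_cases i
      · rw [hΛ']
        exact SetLike.le_def.mp le_sup_right (AddSubgroup.subset_closure (by simp [t]))
      · simpa [t] using hle (b 1).2
      · rw [hΛ']
        exact SetLike.le_def.mp le_sup_right (AddSubgroup.subset_closure (by simp [t]))
      · simpa [t] using hle (b 3).2
    have hS : ({(k : ℂ)⁻¹ • ((b 0 : Λ) : V), (k : ℂ)⁻¹ • ((b 2 : Λ) : V)} : Set V)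
        ⊆ Set.range fun i => (t i : ℂ)⁻¹ • ((b i : Λ) : V) := by
      intro x hx
      rcases hx with hx | hx
      · exact ⟨0, by simp [t, hx]⟩
      · rw [Set.mem_singleton_iff] at hx
        exact ⟨2, by simp [t, hx]⟩
    obtain ⟨b', hb'⟩ := basis_scaled Λ Λ' b t ht hw _ hS hΛ'
    have hb'0 : ((b' 0 : Λ') : V) = (k : ℂ)⁻¹ • ((b 0 : Λ) : V) := by rw [hb' 0]; simp [t]
    have hb'1 : ((b' 1 : Λ') : V) = ((b 1 : Λ) : V) := by rw [hb' 1]; simp [t]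
    have hb'2 : ((b' 2 : Λ') : V) = (k : ℂ)⁻¹ • ((b 2 : Λ) : V) := by rw [hb' 2]; simp [t]
    have hb'3 : ((b' 3 : Λ') : V) = ((b 3 : Λ) : V) := by rw [hb' 3]; simp [t]
    have hcomb0 : ∀ x y : V, ((k : ℂ) ^ 2 * D.H x y).im = (k : ℝ) ^ 2 * (D.H x y).im := by
      intro x y
      rw [show ((k : ℂ) ^ 2) = (((k : ℝ) ^ 2 : ℝ) : ℂ) by push_cast; ring,
        Complex.im_ofReal_mul]
    have hcomb1 : ∀ x y : V, ((k : ℂ) ^ 2 * D.H ((k : ℂ)⁻¹ • x) y).im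
        = (k : ℝ) * (D.H x y).im := by
      intro x y
      rw [hinv, show (k : ℂ) ^ 2 * ((k : ℂ)⁻¹ * D.H x y) = ((k : ℝ) : ℂ) * D.H x y by
        push_cast; field_simp, Complex.im_ofReal_mul]
    have hcomb2 : ∀ x y : V, ((k : ℂ) ^ 2 * D.H ((k : ℂ)⁻¹ • x) ((k : ℂ)⁻¹ • y)).im
        = (D.H x y).im := by
      intro x y
      rw [hinv, D.smul_right,
        show (k : ℂ) ^ 2 * ((k : ℂ)⁻¹ * ((k : ℂ)⁻¹ * D.H x y)) = D.H x y by
          field_simp]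
    have hcomb3 : ∀ x y : V, ((k : ℂ) ^ 2 * D.H x ((k : ℂ)⁻¹ • y)).im
        = (k : ℝ) * (D.H x y).im := by
      intro x y
      rw [D.smul_right, show (k : ℂ) ^ 2 * ((k : ℂ)⁻¹ * D.H x y) = ((k : ℝ) : ℂ) * D.H x y by
        push_cast; field_simp, Complex.im_ofReal_mul]
    set s : Fin 4 → ℂ := ![D.χ (b 0) ^ k, D.χ (b 1) ^ (k ^ 2),
      D.χ (b 2) ^ k, D.χ (b 3) ^ (k ^ 2)] with hss
    have hs : ∀ i, ‖s i‖ = 1 := by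
      intro i; fin_cases i <;> simp [s, norm_pow, D.χ_norm]
    obtain ⟨D', hH', hχform⟩ := construct_AH (H := fun x y => (k : ℂ) ^ 2 * D.H x y)
      hadd' hsmul' hconj' b' 1 ((k : ℤ) ^ 2 * d)
      (by rw [hb'0, hb'2, hcomb2]; simpa using hD02)
      (by rw [hb'1, hb'3, hcomb0, hD13]; push_cast; ring)
      (by rw [hb'0, hb'1, hcomb1, hD01]; ring)
      (by rw [hb'0, hb'3, hcomb1, hD03]; ring)
      (by rw [hb'1, hb'2, hcomb3, hD12]; ring)
      (by rw [hb'2, hb'3, hcomb1, hD23]; ring)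
      s hs
    have hχ'ne : ∀ x : Λ', D'.χ x ≠ 0 := by
      intro x h
      have := D'.χ_norm x
      rw [h] at this
      simp at this
    have hib : ∀ i, (⟨((b i : Λ) : V), hle (b i).2⟩ : Λ') = (t i : ℤ) • b' i := by
      intro i
      apply Subtype.ext
      have : (((t i : ℤ) • b' i : Λ') : V) = (t i : ℤ) • ((b' i : Λ') : V) := by simp
      rw [this, hb' i, ← Int.cast_smul_eq_zsmul ℂ]
      push_cast
      rw [smul_inv_smul₀ (ht i)]
    have hrepib : ∀ i, b'.repr (⟨((b i : Λ) : V), hle (b i).2⟩ : Λ')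
        = Finsupp.single i (t i : ℤ) := by
      intro i
      rw [hib i, map_zsmul, b'.repr_self, Finsupp.smul_single]
      simp
    have hbase : ∀ i, D'.χ ⟨((b i : Λ) : V), hle (b i).2⟩ = D.χ (b i) ^ (k ^ 2) := by
      intro i
      rw [hχform, hrepib i]
      fin_cases i <;> simp [t, s, Finsupp.single_apply] <;>
        (rw [← pow_mul]; congr 1; ring)
    refine ⟨⟨D', hH', ?_⟩, ?_, ?_⟩
    · refine chi_eq_of_basis hle b (fun l => D.χ l ^ (k ^ 2)) D'.χ
        (fun l m => (k : ℝ) ^ 2 * (D.H (l : V) (m : V)).im)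
        (fun l => pow_ne_zero _ (hχne l)) hχ'ne ?_ ?_ hbase
      · intro l m
        beta_reduce
        rw [D.χ_mul, mul_pow, mul_pow, ← Complex.exp_nat_mul]
        congr 2
        push_cast
        ring
      · intro l m
        beta_reduce
        have hιadd : (⟨(l : V), hle l.2⟩ : Λ') + ⟨(m : V), hle m.2⟩
            = ⟨((l + m : Λ) : V), hle (l + m).2⟩ := Subtype.ext (by simp)
        rw [← hιadd, D'.χ_mul, hH', hcomb0]
    · -- minimality
      rintro m hm ⟨D'', hH'', -⟩
      have hw0 : (k : ℂ)⁻¹ • ((b 0 : Λ) : V) ∈ Λ' := by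
        rw [hΛ']
        exact SetLike.le_def.mp le_sup_right (AddSubgroup.subset_closure (by simp))
      have hw2 : (k : ℂ)⁻¹ • ((b 2 : Λ) : V) ∈ Λ' := by
        rw [hΛ']
        exact SetLike.le_def.mp le_sup_right (AddSubgroup.subset_closure (by simp))
      obtain ⟨z, hz⟩ := D''.integral ⟨_, hw0⟩ ⟨_, hw2⟩
      rw [hH'', hinv, D.smul_right,
        show (m : ℂ) * ((k : ℂ)⁻¹ * ((k : ℂ)⁻¹ * D.H ((b 0 : Λ) : V) ((b 2 : Λ) : V)))
          = ((((m : ℝ) * (k : ℝ)⁻¹ * (k : ℝ)⁻¹ : ℝ)) : ℂ) * D.H ((b 0 : Λ) : V) ((b 2 : Λ) : V)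
          by push_cast; ring,
        Complex.im_ofReal_mul, hD02, mul_one] at hz
      have hkRpos : (0 : ℝ) < (k : ℝ) := by exact_mod_cast hkpos
      have hkkpos : (0 : ℝ) < (k : ℝ) * (k : ℝ) := by positivity
      have hmz : (m : ℝ) = (z : ℝ) * ((k : ℝ) * (k : ℝ)) := by
        field_simp at hz
        linear_combination hz
      have hmpos : (0 : ℝ) < (m : ℝ) := by exact_mod_cast hm
      have hzpos : (0 : ℝ) < (z : ℝ) := by nlinarith
      have hzZ : (0 : ℤ) < z := by exact_mod_cast hzpos
      have hz1Z : (1 : ℤ) ≤ z := by omega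
      have hz1 : (1 : ℝ) ≤ (z : ℝ) := by exact_mod_cast hz1Z
      have hfin2 : (k : ℝ) * (k : ℝ) ≤ (m : ℝ) := by nlinarith
      have hfin : ((k ^ 2 : ℕ) : ℝ) ≤ ((m : ℕ) : ℝ) := by push_cast; nlinarith
      exact_mod_cast hfin
    · -- exponent
      have hkw0 : (k : ℤ) • ((b' 0 : Λ') : V) ∈ Λ := by
        rw [hb'0, ← Int.cast_smul_eq_zsmul ℂ]
        push_cast
        rw [smul_inv_smul₀ hkC]
        exact (b 0).2
      have hkw1 : (k : ℤ) • ((b' 1 : Λ') : V) ∈ Λ := by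
        rw [hb'1]; exact AddSubgroup.zsmul_mem _ (b 1).2 _
      have hkw2 : (k : ℤ) • ((b' 2 : Λ') : V) ∈ Λ := by
        rw [hb'2, ← Int.cast_smul_eq_zsmul ℂ]
        push_cast
        rw [smul_inv_smul₀ hkC]
        exact (b 2).2
      have hkw3 : (k : ℤ) • ((b' 3 : Λ') : V) ∈ Λ := by
        rw [hb'3]; exact AddSubgroup.zsmul_mem _ (b 3).2 _
      have hall : ∀ x : Λ', (k : ℤ) • (x : V) ∈ Λ := by
        intro x
        have := mem_of_basis b'
          (AddSubgroup.comap Λ'.subtype (AddSubgroup.comap (zsmulAddGroupHom (k : ℤ)) Λ))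
          (fun i => by
            fin_cases i <;>
              simp only [AddSubgroup.mem_comap, zsmulAddGroupHom_apply,
                AddSubgroup.coe_subtype] <;>
              [exact hkw0; exact hkw1; exact hkw2; exact hkw3]) x
        simpa [AddSubgroup.mem_addSubgroupOf, AddSubgroup.mem_comap, zsmulAddGroupHom_apply] using this
      have claim1 : ∀ y : Λ' ⧸ Λ.addSubgroupOf Λ', k • y = 0 := by
        intro y
        refine QuotientAddGroup.induction_on y ?_
        intro x
        rw [← QuotientAddGroup.mk_nsmul, QuotientAddGroup.eq_zero_iff,
          AddSubgroup.mem_addSubgroupOf]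
        have h := hall x
        rw [show ((k : ℤ) • (x : V)) = ((k • x : Λ') : V) by simp] at h
        exact h
      have claim2 : addOrderOf ((QuotientAddGroup.mk (b' 0)) : Λ' ⧸ Λ.addSubgroupOf Λ')
          = k := by
        rw [addOrderOf_eq_iff hkpos]
        constructor
        · exact claim1 _
        · intro j hj hjpos heq
          rw [← QuotientAddGroup.mk_nsmul, QuotientAddGroup.eq_zero_iff,
            AddSubgroup.mem_addSubgroupOf] at heq
          set l : Λ := ⟨_, heq⟩ with hl
          have hlv : (l : V) = j • ((b' 0 : Λ') : V) := by simp [hl]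
          have hkl : (k • l : Λ) = j • (b 0) := by
            apply Subtype.ext
            rw [show ((k • l : Λ) : V) = k • (l : V) by simp,
              show ((j • (b 0) : Λ) : V) = j • ((b 0 : Λ) : V) by simp,
              hlv, smul_comm, hb'0]
            congr 1
            rw [← Nat.cast_smul_eq_nsmul ℂ, smul_inv_smul₀ hkC]
          have hco := congrArg (fun a : Λ => b.repr a 0) hkl
          simp [map_nsmul, Finsupp.smul_apply, b.repr_self,
            Finsupp.single_apply, smul_eq_mul, nsmul_eq_mul] at hco
          have hdvd : (k : ℤ) ∣ (j : ℤ) := ⟨b.repr l 0, by linear_combination -hco⟩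
          have := Int.le_of_dvd (by exact_mod_cast hjpos) hdvd
          have : k ≤ j := by exact_mod_cast this
          omega
      have hd1 : AddMonoid.exponent (Λ' ⧸ Λ.addSubgroupOf Λ') ∣ k :=
        AddMonoid.exponent_dvd_of_forall_nsmul_eq_zero claim1
      have hd2 : k ∣ AddMonoid.exponent (Λ' ⧸ Λ.addSubgroupOf Λ') :=
        claim2 ▸ AddMonoid.addOrder_dvd_exponent _
      exact Nat.dvd_antisymm hd2 hd1
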